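/- For every p ∈ (0,1), the function T(p) = (2σ²/(h−ℓ)²)·(2p−1)·ln(p/(1−p)) is twice differentiable at p and satisfies (ℒT)(p) = (1/2)·((h−ℓ)/σ)²·p²(1−p)²·T''(p) = 1. -/

import Mathlib

open Real

/-- For every `p ∈ (0,1)`, `T(p) = (2σ²/(h-ℓ)²)(2p-1)·ln(p/(1-p))` is twice
differentiable at `p` and satisfies `(ℒT)(p) = (1/2)((h-ℓ)/σ)² p²(1-p)² T''(p) = 1`. -/
theorem stmt_4 (h ℓ σ : ℝ) (hhl : ℓ < h) (hσ : 0 < σ)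
    (T : ℝ → ℝ)
    (hT : ∀ p : ℝ, T p = (2 * σ ^ 2 / (h - ℓ) ^ 2) * (2 * p - 1) * Real.log (p / (1 - p))) :
    ∀ p ∈ Set.Ioo (0 : ℝ) 1,
      DifferentiableAt ℝ T p ∧ DifferentiableAt ℝ (deriv T) p ∧
      (1 / 2) * ((h - ℓ) / σ) ^ 2 * p ^ 2 * (1 - p) ^ 2 * deriv (deriv T) p = 1 := by
  intro p hp
  obtain ⟨hp0, hp1⟩ := hp
  have hp0' : p ≠ 0 := hp0.ne'
  have h1p : (0:ℝ) < 1 - p := by linarith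
  have h1p' : (1:ℝ) - p ≠ 0 := h1p.ne'
  have hσ' : σ ≠ 0 := hσ.ne'
  have hhl' : h - ℓ ≠ 0 := by intro h'; linarith [sub_eq_zero.mp h']
  set c := 2 * σ ^ 2 / (h - ℓ) ^ 2 with hc
  set F : ℝ → ℝ := fun q =>
    c * (2 * (Real.log q - Real.log (1 - q)) + (2 * q - 1) * (q⁻¹ + (1 - q)⁻¹)) with hF
  have key : ∀ q ∈ Set.Ioo (0:ℝ) 1, HasDerivAt T (F q) q := by
    intro q hq
    obtain ⟨hq0, hq1⟩ := hq
    have hq0' : q ≠ 0 := hq0.ne'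
    have h1q : (0:ℝ) < 1 - q := by linarith
    have h1q' : (1:ℝ) - q ≠ 0 := h1q.ne'
    have heq : T =ᶠ[nhds q] fun x => c * ((2 * x - 1) * (Real.log x - Real.log (1 - x))) := by
      filter_upwards [IsOpen.mem_nhds isOpen_Ioo (Set.mem_Ioo.mpr ⟨hq0, hq1⟩)] with x hx
      obtain ⟨hx0, hx1⟩ := hx
      rw [hT x, Real.log_div hx0.ne' (by intro h'; linarith [sub_eq_zero.mp h'])]
      ring
    have hlin : HasDerivAt (fun x : ℝ => 2 * x - 1) 2 q := by
      simpa using ((hasDerivAt_id q).const_mul 2).sub_const 1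
    have hlog1 : HasDerivAt Real.log q⁻¹ q := Real.hasDerivAt_log hq0'
    have hone : HasDerivAt (fun x : ℝ => 1 - x) (-1) q := by
      simpa using (hasDerivAt_id q).const_sub 1
    have hlog2 : HasDerivAt (fun x => Real.log (1 - x)) (-1 / (1 - q)) q := hone.log h1q'
    have hd := (hlin.mul (hlog1.sub hlog2)).const_mul c
    have hd' : HasDerivAt (fun x => c * ((2 * x - 1) * (Real.log x - Real.log (1 - x)))) (F q) q := by
      refine hd.congr_deriv ?_
      simp only [hF, Pi.sub_apply]
      field_simp
      ring
    exact hd'.congr_of_eventuallyEq heq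
  have hd1 : HasDerivAt T (F p) p := key p (Set.mem_Ioo.mpr ⟨hp0, hp1⟩)
  have hderivT : deriv T =ᶠ[nhds p] F := by
    filter_upwards [IsOpen.mem_nhds isOpen_Ioo (Set.mem_Ioo.mpr ⟨hp0, hp1⟩)] with x hx
    exact (key x hx).deriv
  have hdF : HasDerivAt F (c / (p ^ 2 * (1 - p) ^ 2)) p := by
    have hlog1 : HasDerivAt Real.log p⁻¹ p := Real.hasDerivAt_log hp0'
    have hone : HasDerivAt (fun x : ℝ => 1 - x) (-1) p := by
      simpa using (hasDerivAt_id p).const_sub 1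
    have hlog2 : HasDerivAt (fun x => Real.log (1 - x)) (-1 / (1 - p)) p := hone.log h1p'
    have hinv1 : HasDerivAt (fun x : ℝ => x⁻¹) (-1 / p ^ 2) p := by
      exact (hasDerivAt_inv hp0').congr_deriv (by ring)
    have hinv2 : HasDerivAt (fun x : ℝ => (1 - x)⁻¹) (((1 - p) ^ 2)⁻¹) p := by
      have h2 := hone.inv h1p'
      refine h2.congr_deriv ?_
      field_simp
    have hlin : HasDerivAt (fun x : ℝ => 2 * x - 1) 2 p := by
      simpa using ((hasDerivAt_id p).const_mul 2).sub_const 1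
    have hd := (((hlog1.sub hlog2).const_mul 2).add (hlin.mul (hinv1.add hinv2))).const_mul c
    refine hd.congr_deriv ?_
    simp only [Pi.add_apply]
    field_simp
    ring
  refine ⟨hd1.differentiableAt, ?_, ?_⟩
  · exact hdF.differentiableAt.congr_of_eventuallyEq hderivT
  · rw [hderivT.deriv_eq, hdF.deriv, hc]
    field_simp
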